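/- (Tension between participant fairness and speaker fairness) There exists an instance where the schedule achieving perfect speaker fairness (Ψ^S = 0) is unfair to participants (Ψ^P > 0) and the schedule achieving perfect participant fairness (Ψ^P = 0) is unfair to speakers (Ψ^S > 0). Concretely: with two participants, two talks with V_{p_1}(t_1)=V_{p_2}(t_1)=1, V_{p_1}(t_2)=V_{p_2}(t_2)=0.7, and four slots with A_{p_1} = (1,1,0,0.2), A_{p_2} = (1,0,1,0.2): the schedule Γ = {(t_1,s_2),(t_2,s_3)} satisfies NEC_{t_1}(Γ) = NEC_{t_2}(Γ) = 0.5 (so Ψ^S(Γ)=0) but NCG_{p_1}(Γ) = 1/1.7 along with NCG_{p_2}(Γ) = 0.7/1.7 (so Ψ^P(Γ) > 0); while Γ' = {(t_1,s_1),(t_2,s_4)} gives NCG_{p_1}(Γ') = NCG_{p_2}(Γ') = 1.14/1.7 (Ψ^P(Γ')=0) but NEC_{t_1}(Γ') = 1 > 0.2 = NEC_{t_2}(Γ') (Ψ^S(Γ') > 0). -/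

import Mathlib

namespace Stmt7

/-- Interest scores for the two talks (same for both participants). -/
noncomputable def V : Fin 2 → ℝ := ![1, 0.7]

/-- Availability scores of the two participants over the four slots. -/
noncomputable def A : Fin 2 → Fin 4 → ℝ := ![![1, 1, 0, 0.2], ![1, 0, 1, 0.2]]

/-- Cumulative gain of participant `p` under schedule `Γ`. -/
noncomputable def CG (p : Fin 2) (Γ : Fin 2 → Fin 4) : ℝ := ∑ t, V t * A p (Γ t)

instance : Nonempty (Fin 2 ↪ Fin 4) := ⟨⟨![0, 1], by decide⟩⟩

/-- Ideal cumulative gain: maximum over injective schedules. -/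
noncomputable def ICG (p : Fin 2) : ℝ :=
  Finset.univ.sup' Finset.univ_nonempty (fun f : Fin 2 ↪ Fin 4 => CG p f)

/-- Normalized cumulative gain. -/
noncomputable def NCG (p : Fin 2) (Γ : Fin 2 → Fin 4) : ℝ := CG p Γ / ICG p

/-- Expected crowd at talk `t`. -/
noncomputable def EC (t : Fin 2) (Γ : Fin 2 → Fin 4) : ℝ :=
  ∑ p : Fin 2, V t * A p (Γ t)

/-- Ideal expected crowd at talk `t`: best single slot. -/
noncomputable def IEC (t : Fin 2) : ℝ :=
  Finset.univ.sup' Finset.univ_nonempty (fun s : Fin 4 => ∑ p : Fin 2, V t * A p s)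

/-- Normalized expected crowd. -/
noncomputable def NEC (t : Fin 2) (Γ : Fin 2 → Fin 4) : ℝ := EC t Γ / IEC t

/-- Participant unfairness. -/
noncomputable def ΨP (Γ : Fin 2 → Fin 4) : ℝ :=
  max (NCG 0 Γ) (NCG 1 Γ) - min (NCG 0 Γ) (NCG 1 Γ)

/-- Speaker unfairness. -/
noncomputable def ΨS (Γ : Fin 2 → Fin 4) : ℝ :=
  max (NEC 0 Γ) (NEC 1 Γ) - min (NEC 0 Γ) (NEC 1 Γ)

/-- The speaker-fair schedule: t₁ ↦ s₂, t₂ ↦ s₃. -/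
def Γ : Fin 2 → Fin 4 := ![1, 2]

/-- The participant-fair schedule: t₁ ↦ s₁, t₂ ↦ s₄. -/
def Γ' : Fin 2 → Fin 4 := ![0, 3]

lemma fin4_cases (x : Fin 4) : x = 0 ∨ x = 1 ∨ x = 2 ∨ x = 3 := by
  fin_cases x <;> simp

lemma ICG_eval (p : Fin 2) : ICG p = 1.7 := by
  unfold ICG
  apply le_antisymm
  · apply Finset.sup'_le
    intro f _
    have hne : f 0 ≠ f 1 := f.injective.ne (by decide)
    unfold CG
    rw [Fin.sum_univ_two]
    rcases fin4_cases (f 0) with h0 | h0 | h0 | h0 <;>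
      rcases fin4_cases (f 1) with h1 | h1 | h1 | h1 <;>
      rw [h0, h1] <;>
      first
        | (exact absurd (h0.trans h1.symm) hne)
        | (fin_cases p <;> simp [V, A, Matrix.cons_val] <;> norm_num)
  · fin_cases p
    · refine le_trans ?_ (Finset.le_sup' _ (Finset.mem_univ (⟨![0, 1], by decide⟩ : Fin 2 ↪ Fin 4)))
      norm_num [CG, Fin.sum_univ_two, V, A]
    · refine le_trans ?_ (Finset.le_sup' _ (Finset.mem_univ (⟨![0, 2], by decide⟩ : Fin 2 ↪ Fin 4)))
      simp [CG, Fin.sum_univ_two, V, A, Matrix.cons_val]; norm_num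

lemma IEC0 : IEC 0 = 2 := by
  unfold IEC
  apply le_antisymm
  · apply Finset.sup'_le
    intro s _
    fin_cases s <;> norm_num [V, A, Fin.sum_univ_two]
  · refine le_trans ?_ (Finset.le_sup' _ (Finset.mem_univ (0 : Fin 4)))
    norm_num [V, A, Fin.sum_univ_two]

lemma IEC1 : IEC 1 = 1.4 := by
  unfold IEC
  apply le_antisymm
  · apply Finset.sup'_le
    intro s _
    fin_cases s <;> norm_num [V, A, Fin.sum_univ_two]
  · refine le_trans ?_ (Finset.le_sup' _ (Finset.mem_univ (0 : Fin 4)))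
    norm_num [V, A, Fin.sum_univ_two]

/-- tension between participant fairness and speaker fairness. -/
theorem participant_speaker_fairness_tension :
    Function.Injective Γ ∧ Function.Injective Γ'
    ∧ NEC 0 Γ = 0.5 ∧ NEC 1 Γ = 0.5 ∧ ΨS Γ = 0
    ∧ NCG 0 Γ = 1 / 1.7 ∧ NCG 1 Γ = 0.7 / 1.7 ∧ 0 < ΨP Γ
    ∧ NCG 0 Γ' = 1.14 / 1.7 ∧ NCG 1 Γ' = 1.14 / 1.7 ∧ ΨP Γ' = 0
    ∧ NEC 0 Γ' = 1 ∧ NEC 1 Γ' = 0.2 ∧ 0 < ΨS Γ' := by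
  have h1 : NEC 0 Γ = 0.5 := by
    simp [NEC, EC, IEC0, Γ, Fin.sum_univ_two, V, A]; norm_num
  have h2 : NEC 1 Γ = 0.5 := by
    simp [NEC, EC, IEC1, Γ, Fin.sum_univ_two, V, A]; norm_num
  have h3 : NCG 0 Γ = 1 / 1.7 := by
    simp [NCG, CG, ICG_eval, Γ, Fin.sum_univ_two, V, A]
  have h4 : NCG 1 Γ = 0.7 / 1.7 := by
    simp [NCG, CG, ICG_eval, Γ, Fin.sum_univ_two, V, A]
  have h5 : NCG 0 Γ' = 1.14 / 1.7 := by
    simp [NCG, CG, ICG_eval, Γ', Fin.sum_univ_two, V, A]; norm_num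
  have h6 : NCG 1 Γ' = 1.14 / 1.7 := by
    simp [NCG, CG, ICG_eval, Γ', Fin.sum_univ_two, V, A]; norm_num
  have h7 : NEC 0 Γ' = 1 := by
    norm_num [NEC, EC, IEC0, Γ', Fin.sum_univ_two, V, A]
  have h8 : NEC 1 Γ' = 0.2 := by
    simp [NEC, EC, IEC1, Γ', Fin.sum_univ_two, V, A]
    norm_num
  refine ⟨by decide, by decide, h1, h2, ?_, h3, h4, ?_, h5, h6, ?_, h7, h8, ?_⟩
  · rw [ΨS, h1, h2]; norm_num
  · rw [ΨP, h3, h4]; norm_num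
  · rw [ΨP, h5, h6]; norm_num
  · rw [ΨS, h7, h8]; norm_num

end Stmt7
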